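/- Let X be a code over A such that every element of X is a palindrome, X is an infix code, and X is weakly overlap-free. Then ψ_X is conservative, i.e., ψ_X(X*) ⊆ X*. -/

import Mathlib

open List

/-- Right palindromic closure: `w⁺ = u Q u~` where `Q` is the longest palindromic
suffix of `w = uQ`; equivalently the shortest palindrome having `w` as a prefix. -/
noncomputable def palClosure {A : Type*} (w : List A) : List A :=
  letI : DecidablePred fun k => (w.drop k).reverse = w.drop k :=
    fun _ => Classical.propDecidable _
  w ++ (w.take (Nat.find (⟨w.length, by simp⟩ :
    ∃ k, (w.drop k).reverse = w.drop k))).reverse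

/-- The palindromization map `ψ_X` relative to a code `X`, evaluated on the
(unique) `X`-factorization `l = [x₁, …, xₙ]` of a word of `X*`. -/
noncomputable def psiList {A : Type*} (l : List (List A)) : List A :=
  l.foldl (fun p x => palClosure (p ++ x)) []

/-- The (usual) palindromization map `ψ` on words, letter by letter. -/
noncomputable def psiWord {A : Type*} (w : List A) : List A :=
  w.foldl (fun p a => palClosure (p ++ [a])) []

/-- `X` is a code: nonempty words with unique factorization over `X`. -/
def IsCode {A : Type*} (X : Set (List A)) : Prop :=
  (∀ x ∈ X, x ≠ []) ∧
  ∀ l l' : List (List A), (∀ w ∈ l, w ∈ X) → (∀ w ∈ l', w ∈ X) →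
    l.flatten = l'.flatten → l = l'

/-- `X` is a prefix code: nonempty words, none a proper prefix of another. -/
def IsPrefixCode {A : Type*} (X : Set (List A)) : Prop :=
  (∀ x ∈ X, x ≠ []) ∧ ∀ x ∈ X, ∀ y ∈ X, x <+: y → x = y

/-- `X` is a maximal prefix code over `A`. -/
def IsMaximalPrefixCode {A : Type*} (X : Set (List A)) : Prop :=
  IsPrefixCode X ∧ ∀ Y : Set (List A), IsPrefixCode Y → X ⊆ Y → X = Y

/-- `w ∈ X*`. -/
def InStar {A : Type*} (X : Set (List A)) (w : List A) : Prop :=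
  ∃ l : List (List A), (∀ u ∈ l, u ∈ X) ∧ l.flatten = w

/-- The finite word `w` is a prefix of the infinite word `s`. -/
def PrefixOfInf {A : Type*} (w : List A) (s : ℕ → A) : Prop :=
  ∀ i : ℕ, ∀ h : i < w.length, w.get ⟨i, h⟩ = s i

/-- The finite word `w` is a factor of the infinite word `s`. -/
def FactorOfInf {A : Type*} (w : List A) (s : ℕ → A) : Prop :=
  ∃ i : ℕ, w = List.ofFn fun k : Fin w.length => s (i + k.1)

/-- `X` has finite deciphering delay. -/
def FiniteDecipheringDelay {A : Type*} (X : Set (List A)) : Prop :=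
  ∃ k : ℕ, ∀ x ∈ X, ∀ x' ∈ X,
    (∃ (l l' : List (List A)) (r : List A),
      (∀ w ∈ l, w ∈ X) ∧ l.length = k ∧ (∀ w ∈ l', w ∈ X) ∧
      x ++ l.flatten ++ r = x' ++ l'.flatten) → x = x'

/-- The sequence `y = y₁y₂⋯ ∈ X^ω` is alternating. -/
def Alternating {A : Type*} (y : ℕ → List A) : Prop :=
  ∃ a b : A, a ≠ b ∧ ∃ (lam : List A) (idx : ℕ → ℕ), StrictMono idx ∧
    ∀ k : ℕ, (lam ++ [a]) <+: y (idx (2 * k)) ∧ (lam ++ [b]) <+: y (idx (2 * k + 1))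

/-- The infinite word `s` is ultimately periodic. -/
def UltimatelyPeriodic {A : Type*} (s : ℕ → A) : Prop :=
  ∃ p : ℕ, 0 < p ∧ ∃ N : ℕ, ∀ n ≥ N, s (n + p) = s n

/-- The infinite word `s` is uniformly recurrent: every factor occurs in every
sufficiently long factor of `s`. -/
def UniformlyRecurrent {A : Type*} (s : ℕ → A) : Prop :=
  ∀ w : List A, FactorOfInf w s →
    ∃ N : ℕ, ∀ i : ℕ, w <:+: List.ofFn fun k : Fin N => s (i + k.1)

/-- Factor complexity of the infinite word `s`. -/
noncomputable def complexity {A : Type*} (s : ℕ → A) (n : ℕ) : ℕ :=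
  {u : List A | u.length = n ∧ FactorOfInf u s}.ncard

/-- A word `w` is primitive if it is not a proper power. -/
def Primitive {A : Type*} (w : List A) : Prop :=
  ∀ (v : List A) (n : ℕ), 1 < n → w ≠ (List.replicate n v).flatten


section Aux
variable {A : Type*}

/-- `palClosure w = w ++ (w.take k).reverse` for the minimal `k` with palindromic drop. -/
lemma palClosure_find (w : List A) :
    ∃ k, (w.drop k).reverse = w.drop k ∧
      (∀ j, (w.drop j).reverse = w.drop j → k ≤ j) ∧
      palClosure w = w ++ (w.take k).reverse := by
  letI : DecidablePred fun k => (w.drop k).reverse = w.drop k :=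
    fun _ => Classical.propDecidable _
  have h : ∃ k, (w.drop k).reverse = w.drop k := ⟨w.length, by simp⟩
  exact ⟨Nat.find h, Nat.find_spec h, fun j hj => Nat.find_le hj,
    by unfold palClosure; rfl⟩

lemma boundary (l : List (List A)) : ∀ k, k ≤ l.flatten.length →
    (∃ j, ((l.take j).flatten).length = k) ∨
    ∃ j, ∃ h : j < l.length,
      ((l.take j).flatten).length < k ∧ k < ((l.take j).flatten).length + l[j].length := by
  induction l with
  | nil => intro k hk; simp at hk; exact Or.inl ⟨0, by simp [hk]⟩
  | cons u t ih =>
    intro k hk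
    rcases Nat.lt_or_ge k u.length with h | h
    · rcases Nat.eq_zero_or_pos k with rfl | hk0
      · exact Or.inl ⟨0, by simp⟩
      · exact Or.inr ⟨0, by simp, by simpa, by simpa⟩
    · rcases ih (k - u.length) (by simp at hk ⊢; omega) with ⟨j, hj⟩ | ⟨j, hjl, h1, h2⟩
      · refine Or.inl ⟨j + 1, ?_⟩
        simp [List.take_succ_cons] at hj ⊢; omega
      · refine Or.inr ⟨j + 1, by simpa using Nat.succ_lt_succ hjl, ?_, ?_⟩ <;>
          simp [List.take_succ_cons] at h1 h2 ⊢ <;> omega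
end Aux

section Main
variable {A : Type*} {X : Set (List A)}
variable (hpal : ∀ x ∈ X, x.reverse = x)
    (hinfix : ∀ x ∈ X, ∀ y ∈ X, x <:+: y → x = y)
    (hwof : ∀ x ∈ X, ∀ sfx pfx : List A, x = sfx ++ pfx →
      (∃ x' ∈ X, sfx <:+ x' ∧ sfx ≠ x' ∧ sfx ≠ []) →
      (∃ x'' ∈ X, pfx <+: x'' ∧ pfx ≠ x'' ∧ pfx ≠ []) → False)

include hpal hinfix hwof in
/-- An interior palindromic suffix is impossible. -/
lemma no_interior (x : List A) (hx : x ∈ X) (u : List A) (hu : u ∈ X)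
    (C : List A) (hC : (∃ v ∈ X, ∃ D, C = v ++ D) ∨ C = [])
    (m : ℕ) (hm0 : 0 < m) (hmu : m < u.length)
    (hQ : (u.drop m ++ (C ++ x)).reverse = u.drop m ++ (C ++ x)) : False := by
  set s := u.drop m with hs
  have hslen : s.length = u.length - m := by simp [hs]
  have hsne : s ≠ [] := by
    intro h; rw [h] at hslen; simp at hslen; omega
  have hsu : s <:+ u := List.drop_suffix _ _
  have hsnu : s ≠ u := by
    intro h; rw [h] at hslen; omega
  -- rewrite hQ: left side is x ++ stuff
  have hQ' : x ++ (C.reverse ++ s.reverse) = s ++ (C ++ x) := by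
    have := hQ
    rw [List.reverse_append, List.reverse_append, hpal x hx] at this
    simpa [List.append_assoc] using this
  have hxQ : x <+: s ++ (C ++ x) := hQ' ▸ List.prefix_append _ _
  have hsQ : s <+: s ++ (C ++ x) := List.prefix_append _ _
  have hxlen : x.length ≤ s.length + C.length + x.length := by omega
  rcases le_or_gt x.length s.length with hle | hlt
  · -- x a prefix of s, hence a proper factor of u
    have hxs : x <+: s := List.prefix_of_prefix_length_le hxQ hsQ hle
    have : x <:+: u := hxs.isInfix.trans hsu.isInfix
    have := hinfix x hx u hu this
    have : x.length = u.length := by rw [this]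
    omega
  · have hsx : s <+: x := List.prefix_of_prefix_length_le hsQ hxQ (le_of_lt hlt)
    obtain ⟨t, hst⟩ := hsx
    have hs0 : 0 < s.length := by omega
    have htne : t ≠ [] := by
      intro h; rw [h] at hst; simp at hst; rw [← hst] at hlt; omega
    have htlen : s.length + t.length = x.length := by
      rw [← hst]; simp
    have htCx : t <+: C ++ x := by
      have h4 : s ++ t <+: s ++ (C ++ x) := by rw [hst]; exact hxQ
      exact (List.prefix_append_right_inj s).1 h4
    have htsuf : t <:+ x := ⟨s, hst⟩
    rcases hC with ⟨v, hv, D, rfl⟩ | rfl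
    · have htvDx : t <+: v ++ (D ++ x) := by simpa [List.append_assoc] using htCx
      have hvpre : v <+: v ++ (D ++ x) := List.prefix_append _ _
      rcases Nat.lt_or_ge t.length v.length with h2 | h2
      · -- t proper prefix of v : weak overlap-freeness violated
        have htv : t <+: v := List.prefix_of_prefix_length_le htvDx hvpre (le_of_lt h2)
        exact hwof x hx s t hst.symm ⟨u, hu, hsu, hsnu, hsne⟩
          ⟨v, hv, htv, fun h => by rw [h] at h2; omega, htne⟩
      · -- v a proper factor of x
        have hvt : v <+: t := List.prefix_of_prefix_length_le hvpre htvDx h2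
        have : v <:+: x := hvt.isInfix.trans htsuf.isInfix
        have := hinfix v hv x hx this
        have : v.length = x.length := by rw [this]
        omega
    · -- C = [] : t proper prefix of x
      have htx : t <+: x := by simpa using htCx
      exact hwof x hx s t hst.symm ⟨u, hu, hsu, hsnu, hsne⟩
        ⟨x, hx, htx, fun h => by rw [h] at htlen; omega, htne⟩

include hpal hinfix hwof in
/-- Key step: the palindromic closure of `(flatten l) ++ x` stays in `X*`. -/
lemma key_step (l : List (List A)) (hl : ∀ u ∈ l, u ∈ X)
    (x : List A) (hx : x ∈ X) :
    ∃ m : List (List A), (∀ u ∈ m, u ∈ X) ∧ m.flatten = palClosure (l.flatten ++ x) := by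
  classical
  set p := l.flatten with hp
  obtain ⟨k, hkpal, hkmin, hkeq⟩ := palClosure_find (p ++ x)
  have hkle : k ≤ p.length := by
    refine hkmin p.length ?_
    rw [List.drop_left]
    exact hpal x hx
  rcases boundary l k (by rw [← hp]; exact hkle) with ⟨j, hj⟩ | ⟨j, hjl, h1, h2⟩
  · -- boundary case: construct the factorization
    refine ⟨l ++ [x] ++ (l.take j).reverse, ?_, ?_⟩
    · intro u hu
      simp only [List.mem_append, List.mem_reverse, List.mem_singleton] at hu
      rcases hu with (hu | rfl) | hu
      · exact hl u hu
      · exact hx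
      · exact hl u (List.mem_of_mem_take hu)
    · rw [hkeq]
      have htake : (p ++ x).take k = (l.take j).flatten := by
        rw [← hj]
        have : p ++ x = (l.take j).flatten ++ ((l.drop j).flatten ++ x) := by
          rw [hp, ← List.append_assoc, ← List.flatten_append, List.take_append_drop]
        rw [this, List.take_left]
      rw [htake]
      have hrev : (l.take j).reverse.flatten = (l.take j).flatten.reverse := by
        rw [List.flatten_reverse]
        congr 1
        rw [List.map_congr_left (fun u hu => hpal u (hl u (List.mem_of_mem_take hu)))]
        simp
      simp [hrev, hp]
  · -- interior case: contradiction
    exfalso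
    set a := (l.take j).flatten with ha
    set u := l[j] with hu
    have hul : u ∈ X := hl u (List.getElem_mem hjl)
    set C := (l.drop (j+1)).flatten with hC
    have hdecomp : p = a ++ (u ++ C) := by
      rw [hp]
      have h3 : l = l.take j ++ l[j] :: l.drop (j+1) := by
        rw [← List.drop_eq_getElem_cons hjl, List.take_append_drop]
      rw [ha, hu, hC, ← List.flatten_cons, ← List.flatten_append]
      exact congrArg List.flatten h3
    set m := k - a.length with hm
    have hk' : k = a.length + m := by omega
    have hQeq : (p ++ x).drop k = u.drop m ++ (C ++ x) := by
      rw [hdecomp, hk', List.append_assoc, List.append_assoc, List.drop_length_add_append]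
      exact List.drop_append_of_le_length (by omega)
    rw [hQeq] at hkpal
    refine no_interior hpal hinfix hwof x hx u hul (C) ?_ m (by omega) (by omega) hkpal
    rcases hd : l.drop (j+1) with _ | ⟨v, rest⟩
    · right; rw [hC, hd]; rfl
    · left
      refine ⟨v, ?_, rest.flatten, by rw [hC, hd]; simp⟩
      have : v ∈ l.drop (j+1) := by rw [hd]; exact List.mem_cons_self
      exact hl v (List.mem_of_mem_drop this)
end Main

/-- If `X ⊆ PAL` is an infix, weakly overlap-free code,
then `ψ_X` is conservative: `ψ_X(X*) ⊆ X*`. -/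
theorem stmt16 {A : Type*} [Fintype A] (X : Set (List A)) (hX : IsCode X)
    (hpal : ∀ x ∈ X, x.reverse = x)
    (hinfix : ∀ x ∈ X, ∀ y ∈ X, x <:+: y → x = y)
    (hwof : ∀ x ∈ X, ∀ sfx pfx : List A, x = sfx ++ pfx →
      (∃ x' ∈ X, sfx <:+ x' ∧ sfx ≠ x' ∧ sfx ≠ []) →
      (∃ x'' ∈ X, pfx <+: x'' ∧ pfx ≠ x'' ∧ pfx ≠ []) → False) :
    ∀ l : List (List A), (∀ w ∈ l, w ∈ X) → InStar X (psiList l) := by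
  intro l
  induction l using List.reverseRecOn with
  | nil => intro _; exact ⟨[], by simp, rfl⟩
  | append_singleton l x ih =>
    intro hl
    have hx : x ∈ X := hl x (by simp)
    obtain ⟨m, hm, hmf⟩ := ih (fun w hw => hl w (by simp [hw]))
    have hps : psiList (l ++ [x]) = palClosure (m.flatten ++ x) := by
      rw [hmf]; simp [psiList, List.foldl_append]
    obtain ⟨m', hm', hm'f⟩ := key_step hpal hinfix hwof m hm x hx
    exact ⟨m', hm', by rw [hm'f, hps]⟩
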